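/- The gradient of the dual TV-denoising objective h(p,q) = −‖H_𝒞(d − βℒ(p,q))‖_F² + ‖d − βℒ(p,q)‖_F² is ∇h(p,q) = −2β ℒ* P_𝒞(d − βℒ(p,q)), and it is Lipschitz continuous with Lipschitz constant at most 16β². -/

import Mathlib

open scoped ENNReal NNReal

noncomputable section

open RealInnerProductSpace

variable {m n : ℕ}

/-- the primal space ℝ^{m×n} with the Frobenius inner product -/
abbrev MatSp (m n : ℕ) : Type := EuclideanSpace ℝ (Fin m × Fin n)

/-- the dual space ℝ^{(m−1)×n} × ℝ^{m×(n−1)} with its Euclidean structure -/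
abbrev DualSp (m n : ℕ) : Type :=
  EuclideanSpace ℝ ((Fin (m - 1) × Fin n) ⊕ (Fin m × Fin (n - 1)))

/-- componentwise orthogonal projection onto the box 𝒞 = [λ, λ⁻¹]^{m×n} -/
def projC (lam : ℝ) (x : MatSp m n) : MatSp m n :=
  (WithLp.equiv 2 (Fin m × Fin n → ℝ)).symm fun ij => max lam (min (x ij) lam⁻¹)

/-- H_𝒞 = I − P_𝒞 -/
def HC (lam : ℝ) (x : MatSp m n) : MatSp m n := x - projC lam x

/-- the dual objective h(p,q) = −‖H_𝒞(d − βℒ(p,q))‖² + ‖d − βℒ(p,q)‖² -/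
def dualObj (lam β : ℝ) (d : MatSp m n) (ℒ : DualSp m n →L[ℝ] MatSp m n)
    (pq : DualSp m n) : ℝ :=
  -‖HC lam (d - β • ℒ pq)‖ ^ 2 + ‖d - β • ℒ pq‖ ^ 2

/-- membership of the clamp in the box -/
lemma projC_mem {lam : ℝ} (hll : lam ≤ lam⁻¹) (z : MatSp m n) (ij : Fin m × Fin n) :
    lam ≤ projC lam z ij ∧ projC lam z ij ≤ lam⁻¹ :=
  ⟨le_max_left _ _, max_le hll (min_le_right _ _)⟩

/-- variational inequality for the componentwise projection -/
lemma projC_var {lam : ℝ} (hll : lam ≤ lam⁻¹) (x y : MatSp m n)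
    (hy : ∀ ij, lam ≤ y ij ∧ y ij ≤ lam⁻¹) :
    ⟪x - projC lam x, y - projC lam x⟫ ≤ 0 := by
  have hscal : ∀ a b : ℝ, lam ≤ b → b ≤ lam⁻¹ →
      (a - max lam (min a lam⁻¹)) * (b - max lam (min a lam⁻¹)) ≤ 0 := by
    intro a b hb1 hb2
    rcases le_total a lam with h | h
    · rw [min_eq_left (h.trans hll), max_eq_left h]
      exact mul_nonpos_of_nonpos_of_nonneg (by linarith) (by linarith)
    rcases le_total lam⁻¹ a with h' | h'
    · rw [min_eq_right h', max_eq_right hll]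
      exact mul_nonpos_of_nonneg_of_nonpos (by linarith) (by linarith)
    · rw [min_eq_left h', max_eq_right h]
      simp
  rw [PiLp.inner_apply]
  apply Finset.sum_nonpos
  intro ij _
  simpa [projC, mul_comm] using hscal (x ij) (y ij) (hy ij).1 (hy ij).2

/-- monotonicity / firm-nonexpansiveness inequality -/
lemma projC_mono {lam : ℝ} (hll : lam ≤ lam⁻¹) (x v : MatSp m n) :
    ‖projC lam (x + v) - projC lam x‖ ^ 2 ≤ ⟪projC lam (x + v) - projC lam x, v⟫ := by
  set Px := projC lam x with hPx
  set Pxv := projC lam (x + v) with hPxv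
  set Q := Pxv - Px with hQ
  have hQB : ⟪Q, x - Px⟫ ≤ 0 := by
    have h := projC_var hll x Pxv (projC_mem hll _)
    rw [real_inner_comm]
    exact h
  have hQA : 0 ≤ ⟪Q, (x + v) - Pxv⟫ := by
    have h := projC_var hll (x + v) Px (projC_mem hll _)
    have e : Px - Pxv = -Q := by rw [hQ]; abel
    rw [e, inner_neg_right] at h
    rw [real_inner_comm]
    linarith
  have n8 : ⟪Q, (x + v) - Pxv⟫ = ⟪Q, x - Px⟫ + ⟪Q, v⟫ - ‖Q‖ ^ 2 := by
    have e : (x + v) - Pxv = (x - Px) + v - Q := by rw [hQ]; abel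
    rw [e, inner_sub_right, inner_add_right, real_inner_self_eq_norm_sq]
  linarith

lemma projC_nonexp {lam : ℝ} (hll : lam ≤ lam⁻¹) (x y : MatSp m n) :
    ‖projC lam y - projC lam x‖ ≤ ‖y - x‖ := by
  have h := projC_mono hll x (y - x)
  have e : x + (y - x) = y := by abel
  rw [e] at h
  have h2 := real_inner_le_norm (projC lam y - projC lam x) (y - x)
  nlinarith [norm_nonneg (projC lam y - projC lam x), norm_nonneg (y - x)]

/-- the quadratic remainder bound -/
lemma projC_remainder {lam : ℝ} (hll : lam ≤ lam⁻¹) (x v : MatSp m n) :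
    |(‖x + v‖ ^ 2 - ‖(x + v) - projC lam (x + v)‖ ^ 2)
      - (‖x‖ ^ 2 - ‖x - projC lam x‖ ^ 2) - 2 * ⟪projC lam x, v⟫| ≤ 2 * ‖v‖ ^ 2 := by
  set Px := projC lam x with hPx
  set Pxv := projC lam (x + v) with hPxv
  set Q := Pxv - Px with hQ
  have hQB : ⟪Q, x - Px⟫ ≤ 0 := by
    have h := projC_var hll x Pxv (projC_mem hll _)
    rw [real_inner_comm]; exact h
  have hQA : 0 ≤ ⟪Q, (x + v) - Pxv⟫ := by
    have h := projC_var hll (x + v) Px (projC_mem hll _)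
    have e : Px - Pxv = -Q := by rw [hQ]; abel
    rw [e, inner_neg_right] at h
    rw [real_inner_comm]; linarith
  have n8 : ⟪Q, (x + v) - Pxv⟫ = ⟪Q, x - Px⟫ + ⟪Q, v⟫ - ‖Q‖ ^ 2 := by
    have e : (x + v) - Pxv = (x - Px) + v - Q := by rw [hQ]; abel
    rw [e, inner_sub_right, inner_add_right, real_inner_self_eq_norm_sq]
  have hmono : ‖Q‖ ^ 2 ≤ ⟪Q, v⟫ := by linarith
  have hQv : ⟪Q, v⟫ ≤ ‖v‖ ^ 2 := by
    have h2 := real_inner_le_norm Q v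
    nlinarith [norm_nonneg Q, norm_nonneg v, sq_nonneg (‖Q‖ - ‖v‖)]
  -- the algebraic identity
  have n1 : ‖(x + v) - Pxv‖ ^ 2 = ‖x + v‖ ^ 2 - 2 * ⟪x + v, Pxv⟫ + ‖Pxv‖ ^ 2 := by
    rw [@norm_sub_sq_real]
  have n2 : ‖x - Px‖ ^ 2 = ‖x‖ ^ 2 - 2 * ⟪x, Px⟫ + ‖Px‖ ^ 2 := by
    rw [@norm_sub_sq_real]
  have ePQ : Pxv = Px + Q := by rw [hQ]; abel
  have n3 : ‖Pxv‖ ^ 2 = ‖Px‖ ^ 2 + 2 * ⟪Px, Q⟫ + ‖Q‖ ^ 2 := by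
    rw [ePQ, @norm_add_sq_real]
  have n4 : ⟪x + v, Pxv⟫ = ⟪x, Px⟫ + ⟪x, Q⟫ + ⟪v, Px⟫ + ⟪v, Q⟫ := by
    rw [ePQ, inner_add_left, inner_add_right, inner_add_right]; ring
  have n5 : ⟪Q, x - Px⟫ = ⟪x, Q⟫ - ⟪Px, Q⟫ := by
    rw [inner_sub_right, real_inner_comm Q x, real_inner_comm Q Px]
  have n6 : ⟪Q, v⟫ = ⟪v, Q⟫ := real_inner_comm _ _
  have n7 : ⟪Px, v⟫ = ⟪v, Px⟫ := real_inner_comm _ _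
  have hid : (‖x + v‖ ^ 2 - ‖(x + v) - Pxv‖ ^ 2) - (‖x‖ ^ 2 - ‖x - Px‖ ^ 2)
      - 2 * ⟪Px, v⟫ = 2 * ⟪Q, x - Px⟫ + 2 * ⟪Q, v⟫ - ‖Q‖ ^ 2 := by
    rw [n1, n2, n3, n4, n5, n6, n7]; ring
  rw [hid, abs_le]
  constructor
  · nlinarith [sq_nonneg ‖v‖]
  · nlinarith [sq_nonneg ‖Q‖]

set_option maxHeartbeats 1600000 in
/-- the gradient of the dual TV-denoising objective is
`∇h(p,q) = −2β ℒ* P_𝒞(d − βℒ(p,q))`, and it is Lipschitz continuous with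
constant at most 16β². -/
theorem dual_tv_objective_gradient_and_lipschitz
    (m n : ℕ) (lam β : ℝ) (hlam₀ : 0 < lam) (hlam₁ : lam < 1) (hβ : 0 < β)
    (d : MatSp m n) (ℒ : DualSp m n →L[ℝ] MatSp m n) (hℒ : ‖ℒ‖ ^ 2 ≤ 8) :
    (∀ pq : DualSp m n,
      HasGradientAt (dualObj lam β d ℒ)
        ((-(2 * β)) • (ContinuousLinearMap.adjoint ℒ) (projC lam (d - β • ℒ pq))) pq) ∧
    LipschitzWith (Real.toNNReal (16 * β ^ 2))
      (fun pq : DualSp m n =>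
        (-(2 * β)) • (ContinuousLinearMap.adjoint ℒ) (projC lam (d - β • ℒ pq))) := by
  have hll : lam ≤ lam⁻¹ := by
    nlinarith [mul_inv_cancel₀ hlam₀.ne']
  have hLnorm : (0:ℝ) ≤ ‖ℒ‖ := norm_nonneg _
  constructor
  · intro pq
    set u := d - β • ℒ pq with hu
    rw [hasGradientAt_iff_isLittleO, Asymptotics.isLittleO_iff]
    intro c hc
    have hδ : 0 < c / (16 * β ^ 2 + 1) := by positivity
    filter_upwards [Metric.ball_mem_nhds pq hδ] with y hy
    have hwd : dist y pq < c / (16 * β ^ 2 + 1) := hy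
    rw [dist_eq_norm] at hwd
    set w := y - pq with hw
    set v : MatSp m n := (-β) • ℒ w with hv
    clear_value u w v
    have huv : d - β • ℒ y = u + v := by
      have : y = pq + w := by rw [hw]; abel
      rw [this, map_add, smul_add, hv, hu, neg_smul]
      abel
    -- rewrite the inner product term
    have hinner : ⟪(-(2 * β)) • (ContinuousLinearMap.adjoint ℒ) (projC lam u), w⟫
        = 2 * ⟪projC lam u, v⟫ := by
      rw [real_inner_smul_left, ContinuousLinearMap.adjoint_inner_left, hv,
        real_inner_smul_right]
      ring
    have hrem := projC_remainder (m := m) (n := n) hll u v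
    have hval : dualObj lam β d ℒ y - dualObj lam β d ℒ pq
        - ⟪(-(2 * β)) • (ContinuousLinearMap.adjoint ℒ) (projC lam u), w⟫
        = (‖u + v‖ ^ 2 - ‖(u + v) - projC lam (u + v)‖ ^ 2)
          - (‖u‖ ^ 2 - ‖u - projC lam u‖ ^ 2) - 2 * ⟪projC lam u, v⟫ := by
      rw [hinner]
      simp only [dualObj, HC, huv, ← hu]
      ring
    rw [Real.norm_eq_abs, hval]
    have hvw : ‖v‖ ≤ β * (‖ℒ‖ * ‖w‖) := by
      rw [hv, norm_smul]
      simp only [norm_neg, Real.norm_eq_abs, abs_of_pos hβ]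
      exact mul_le_mul_of_nonneg_left (ℒ.le_opNorm w) hβ.le
    have hv2 : 2 * ‖v‖ ^ 2 ≤ 16 * β ^ 2 * ‖w‖ ^ 2 := by
      have h1 : ‖v‖ ^ 2 ≤ (β * (‖ℒ‖ * ‖w‖)) ^ 2 := pow_le_pow_left₀ (norm_nonneg v) hvw 2
      nlinarith [sq_nonneg ‖w‖, mul_nonneg (sq_nonneg β) (sq_nonneg ‖w‖)]
    have : |(‖u + v‖ ^ 2 - ‖(u + v) - projC lam (u + v)‖ ^ 2)
          - (‖u‖ ^ 2 - ‖u - projC lam u‖ ^ 2) - 2 * ⟪projC lam u, v⟫|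
        ≤ 16 * β ^ 2 * ‖w‖ ^ 2 := le_trans hrem hv2
    have hnw : ‖w‖ ≥ 0 := norm_nonneg w
    have hwc : ‖w‖ * (16 * β ^ 2 + 1) < c := by
      rwa [lt_div_iff₀ (by positivity : (0:ℝ) < 16 * β ^ 2 + 1)] at hwd
    have hfin : ∀ t : ℝ, 0 ≤ t → t * (16 * β ^ 2 + 1) < c → 16 * β ^ 2 * t ^ 2 ≤ c * t := by
      intro t ht htc
      nlinarith [mul_nonneg ht ht, sq_nonneg β]
    calc |(‖u + v‖ ^ 2 - ‖(u + v) - projC lam (u + v)‖ ^ 2)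
          - (‖u‖ ^ 2 - ‖u - projC lam u‖ ^ 2) - 2 * ⟪projC lam u, v⟫|
        ≤ 16 * β ^ 2 * ‖w‖ ^ 2 := this
      _ ≤ c * ‖w‖ := hfin ‖w‖ hnw hwc
  · apply LipschitzWith.of_dist_le_mul
    intro a b
    have hcoe : ((Real.toNNReal (16 * β ^ 2) : ℝ≥0) : ℝ) = 16 * β ^ 2 :=
      Real.coe_toNNReal _ (by positivity)
    rw [hcoe, dist_eq_norm, dist_eq_norm]
    set ua := d - β • ℒ a with hua
    set ub := d - β • ℒ b with hub
    clear_value ua ub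
    have hdiff : (-(2 * β)) • (ContinuousLinearMap.adjoint ℒ) (projC lam ua)
        - (-(2 * β)) • (ContinuousLinearMap.adjoint ℒ) (projC lam ub)
        = (-(2 * β)) • (ContinuousLinearMap.adjoint ℒ) (projC lam ua - projC lam ub) := by
      rw [← smul_sub, ← map_sub]
    rw [hdiff, norm_smul]
    have hne : ‖projC lam ua - projC lam ub‖ ≤ ‖ua - ub‖ := projC_nonexp hll ub ua
    have huu : ua - ub = β • ℒ (b - a) := by
      rw [hua, hub, map_sub, smul_sub]; abel
    have huub : ‖ua - ub‖ ≤ β * (‖ℒ‖ * ‖a - b‖) := by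
      rw [huu, norm_smul, Real.norm_eq_abs, abs_of_pos hβ, ← norm_neg (ℒ (b - a)), ← map_neg,
        neg_sub]
      exact mul_le_mul_of_nonneg_left (ℒ.le_opNorm _) hβ.le
    have hadj : ‖(ContinuousLinearMap.adjoint ℒ) (projC lam ua - projC lam ub)‖
        ≤ ‖ℒ‖ * ‖projC lam ua - projC lam ub‖ := by
      have h1 := (ContinuousLinearMap.adjoint ℒ).le_opNorm (projC lam ua - projC lam ub)
      have h2 : ‖ContinuousLinearMap.adjoint ℒ‖ = ‖ℒ‖ :=
        ContinuousLinearMap.adjoint.norm_map ℒ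
      rw [h2] at h1; exact h1
    have habs : ‖(-(2 * β) : ℝ)‖ = 2 * β := by
      rw [Real.norm_eq_abs, abs_neg, abs_of_pos (by linarith)]
    rw [habs]
    have hnab := norm_nonneg (a - b)
    have s1 : ‖(ContinuousLinearMap.adjoint ℒ) (projC lam ua - projC lam ub)‖
        ≤ ‖ℒ‖ * ‖ua - ub‖ := hadj.trans (mul_le_mul_of_nonneg_left hne hLnorm)
    have s2 : ‖ℒ‖ * ‖ua - ub‖ ≤ ‖ℒ‖ * (β * (‖ℒ‖ * ‖a - b‖)) :=
      mul_le_mul_of_nonneg_left huub hLnorm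
    have s3 : ‖ℒ‖ * (β * (‖ℒ‖ * ‖a - b‖)) ≤ 8 * (β * ‖a - b‖) := by
      nlinarith [mul_nonneg hβ.le hnab]
    have s4 := s1.trans (s2.trans s3)
    nlinarith [mul_le_mul_of_nonneg_left s4 (by positivity : (0:ℝ) ≤ 2 * β)]

end
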